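/- Let v ∈ ℝ^n be a vector all of whose coordinates are non-zero, and let X be uniformly distributed on {-1, 1}^n. Then for every b ∈ ℝ, ℙ(⟨X, v⟩ = b) ≤ binomial(n, ⌊n/2⌋) · 2^{-n}; in particular ℙ(⟨X, v⟩ = b) = O(n^{-1/2}). -/

import Mathlib

open Finset

lemma elo_central (m : ℕ) : m.centralBinom ^ 2 * (2 * m + 1) ≤ 16 ^ m := by
  induction m with
  | zero => simp [Nat.centralBinom]
  | succ m ih =>
    have key : (m + 1) * Nat.centralBinom (m + 1) = 2 * (2 * m + 1) * m.centralBinom :=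
      Nat.succ_mul_centralBinom_succ m
    have h1 : (m + 1) ^ 2 * (Nat.centralBinom (m + 1) ^ 2 * (2 * (m + 1) + 1))
        = (4 * (2 * m + 3)) * ((2 * m + 1) * (m.centralBinom ^ 2 * (2 * m + 1))) := by
      have : ((m + 1) * Nat.centralBinom (m + 1)) ^ 2 = (2 * (2 * m + 1) * m.centralBinom) ^ 2 := by
        rw [key]
      nlinarith [this]
    have h2 : (4 * (2 * m + 3)) * ((2 * m + 1) * (m.centralBinom ^ 2 * (2 * m + 1)))
        ≤ (4 * (2 * m + 3)) * ((2 * m + 1) * 16 ^ m) :=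
      Nat.mul_le_mul_left _ (Nat.mul_le_mul_left _ ih)
    have h3 : (4 * (2 * m + 3)) * ((2 * m + 1) * 16 ^ m) ≤ (m + 1) ^ 2 * 16 ^ (m + 1) := by
      have h4 : 4 * (2 * m + 3) * (2 * m + 1) ≤ (m + 1) ^ 2 * 16 := by nlinarith
      calc (4 * (2 * m + 3)) * ((2 * m + 1) * 16 ^ m)
          = (4 * (2 * m + 3) * (2 * m + 1)) * 16 ^ m := by ring
        _ ≤ ((m + 1) ^ 2 * 16) * 16 ^ m := Nat.mul_le_mul_right _ h4
        _ = (m + 1) ^ 2 * 16 ^ (m + 1) := by ring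
    have := h1 ▸ (h2.trans h3)
    exact Nat.le_of_mul_le_mul_left this (by positivity)

lemma elo_choose_sq (n : ℕ) : n.choose (n / 2) ^ 2 * (n + 1) ≤ 4 ^ n := by
  rcases Nat.even_or_odd n with ⟨m, hm⟩ | ⟨m, hm⟩
  · subst hm
    have h := elo_central m
    have h2 : (m + m) / 2 = m := by omega
    rw [h2]
    have h3 : (m + m).choose m = m.centralBinom := by
      rw [Nat.centralBinom_eq_two_mul_choose]; congr 1; omega
    rw [h3]
    calc m.centralBinom ^ 2 * (m + m + 1) = m.centralBinom ^ 2 * (2 * m + 1) := by ring_nf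
      _ ≤ 16 ^ m := h
      _ = 4 ^ (m + m) := by
          rw [show (16 : ℕ) = 4 ^ 2 by norm_num, ← pow_mul]; congr 1; omega
  · subst hm
    have h := elo_central (m + 1)
    have h2 : (2 * m + 1) / 2 = m := by omega
    rw [h2]
    have key : 2 * (2 * m + 1).choose m = (m + 1).centralBinom := by
      rw [Nat.centralBinom_eq_two_mul_choose]
      have e1 : 2 * (m + 1) = (2 * m + 1) + 1 := by omega
      have e2 : (2 * m + 1).choose (m + 1) = (2 * m + 1).choose m := by
        have := Nat.choose_symm (n := 2 * m + 1) (k := m) (by omega)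
        have e3 : 2 * m + 1 - m = m + 1 := by omega
        rw [e3] at this
        exact this
      rw [e1, Nat.choose_succ_succ, e2]
      ring
    have big : 4 * ((2 * m + 1).choose m ^ 2 * (2 * m + 1 + 1)) ≤ 4 * 4 ^ (2 * m + 1) := by
      calc 4 * ((2 * m + 1).choose m ^ 2 * (2 * m + 1 + 1))
          = (2 * (2 * m + 1).choose m) ^ 2 * (2 * m + 2) := by ring
        _ = (m + 1).centralBinom ^ 2 * (2 * m + 2) := by rw [key]
        _ ≤ (m + 1).centralBinom ^ 2 * (2 * (m + 1) + 1) := by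
            apply Nat.mul_le_mul_left; omega
        _ ≤ 16 ^ (m + 1) := h
        _ = 4 * 4 ^ (2 * m + 1) := by
            rw [show (16 : ℕ) = 4 ^ 2 by norm_num, ← pow_mul]
            rw [show 2 * (m + 1) = (2 * m + 1) + 1 by omega, pow_succ]
            ring
    exact Nat.le_of_mul_le_mul_left big (by norm_num)

lemma elo_count (n : ℕ) (v : Fin n → ℝ) (hv : ∀ i, v i ≠ 0) (b : ℝ) :
    ({x : Fin n → ℝ | (∀ i, x i = 1 ∨ x i = -1) ∧ ∑ i, x i * v i = b}).ncard
      ≤ n.choose (n / 2) := by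
  classical
  set ε : Fin n → ℝ := fun i => if 0 < v i then 1 else -1 with hε
  set w : Fin n → ℝ := fun i => ε i * v i with hw
  have hεpm : ∀ i, ε i = 1 ∨ ε i = -1 := by
    intro i; by_cases h : 0 < v i <;> simp [hε, h]
  have hwpos : ∀ i, 0 < w i := by
    intro i
    by_cases h : 0 < v i
    · simpa [hw, hε, h] using h
    · have : v i < 0 := lt_of_le_of_ne (not_lt.mp h) (hv i)
      simp only [hw, hε, if_neg h]
      nlinarith
  set S := {x : Fin n → ℝ | (∀ i, x i = 1 ∨ x i = -1) ∧ ∑ i, x i * v i = b} with hS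
  have hSfin : S.Finite := by
    apply Set.Finite.subset (Set.finite_range
      (fun A : Finset (Fin n) => fun i => if i ∈ A then (1 : ℝ) else -1))
    intro x hx
    refine ⟨univ.filter (fun i => x i = 1), funext fun i => ?_⟩
    rcases hx.1 i with h1 | h1
    · simp [h1]
    · simp [h1]
      intro h; norm_num at h
  set f : (Fin n → ℝ) → Finset (Fin n) := fun x => univ.filter (fun i => x i = ε i) with hf
  set 𝒜 : Finset (Finset (Fin n)) :=
    univ.filter (fun A => 2 * ∑ i ∈ A, w i - ∑ i, w i = b) with h𝒜
  have hmaps : ∀ x ∈ S, f x ∈ 𝒜 := by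
    intro x hx
    obtain ⟨hx1, hx2⟩ := hx
    have hterm : ∀ i, x i * v i = if x i = ε i then w i else -w i := by
      intro i
      by_cases h : x i = ε i
      · simp [h, hw]
      · have hxi : x i = -ε i := by
          rcases hx1 i with h1 | h1 <;> rcases hεpm i with h2 | h2 <;>
            simp only [h1, h2, not_true_eq_false] at h ⊢ <;> norm_num
        rw [if_neg h, hxi]
        simp only [hw]; ring
    have hsum : ∑ i, x i * v i = 2 * ∑ i ∈ f x, w i - ∑ i, w i := by
      have e1 : ∑ i, x i * v i
          = ∑ i ∈ univ.filter (fun i => x i = ε i), x i * v i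
            + ∑ i ∈ univ.filter (fun i => ¬ x i = ε i), x i * v i :=
        (Finset.sum_filter_add_sum_filter_not univ _ _).symm
      have e2 : ∑ i ∈ univ.filter (fun i => x i = ε i), x i * v i
          = ∑ i ∈ f x, w i := by
        apply Finset.sum_congr rfl
        intro i hi
        rw [hterm i, if_pos (by simpa using (Finset.mem_filter.mp hi).2)]
      have e3 : ∑ i ∈ univ.filter (fun i => ¬ x i = ε i), x i * v i
          = -∑ i ∈ univ.filter (fun i => ¬ x i = ε i), w i := by
        rw [← Finset.sum_neg_distrib]
        apply Finset.sum_congr rfl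
        intro i hi
        rw [hterm i, if_neg (by simpa using (Finset.mem_filter.mp hi).2)]
      have e4 : ∑ i ∈ f x, w i + ∑ i ∈ univ.filter (fun i => ¬ x i = ε i), w i
          = ∑ i, w i := Finset.sum_filter_add_sum_filter_not univ _ _
      rw [e1, e2, e3]
      linarith
    simp only [h𝒜, Finset.mem_filter, Finset.mem_univ, true_and]
    linarith [hx2, hsum]
  have hinj : Set.InjOn f S := by
    intro x hx y hy hfxy
    funext i
    have hiff : (x i = ε i) ↔ (y i = ε i) := by
      have := Finset.ext_iff.mp hfxy i
      simpa [hf] using this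
    rcases hεpm i with h3 | h3 <;> rw [h3] at hiff <;>
      rcases hx.1 i with h1 | h1 <;> rcases hy.1 i with h2 | h2 <;>
        rw [h1, h2] at hiff ⊢ <;> first | rfl | norm_num at hiff
  have hanti : IsAntichain (· ⊆ ·) (𝒜 : Set (Finset (Fin n))) := by
    intro A hA B hB hne hsub
    simp only [Finset.mem_coe, h𝒜, Finset.mem_filter, Finset.mem_univ, true_and] at hA hB
    have hAB : ∑ i ∈ A, w i = ∑ i ∈ B, w i := by linarith
    have hdiff : ∑ i ∈ B \ A, w i = 0 := by
      have := Finset.sum_sdiff (f := w) hsub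
      linarith
    have hne' : (B \ A).Nonempty := by
      rw [Finset.sdiff_nonempty]
      intro hBA
      exact hne (Finset.Subset.antisymm hsub hBA)
    have : 0 < ∑ i ∈ B \ A, w i :=
      Finset.sum_pos (fun i _ => hwpos i) hne'
    linarith
  have hsperner : 𝒜.card ≤ n.choose (n / 2) := by
    have := IsAntichain.sperner hanti
    simpa using this
  have hcard : S.ncard ≤ 𝒜.card := by
    rw [Set.ncard_eq_toFinset_card S hSfin]
    apply Finset.card_le_card_of_injOn f
    · intro a ha
      exact hmaps a (by simpa using ha)
    · intro a ha b hb
      exact hinj (by simpa using ha) (by simpa using hb)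
  exact hcard.trans hsperner

/-- **The Erdős–Littlewood–Offord theorem.** If `v ∈ ℝ^n` has all coordinates non-zero
and `X` is uniform on `{-1,1}^n`, then for every `b ∈ ℝ` we have
`ℙ(⟨X, v⟩ = b) ≤ binomial(n, ⌊n/2⌋) 2^{-n}`; in particular `ℙ(⟨X, v⟩ = b) = O(n^{-1/2})`.
The probability is formulated by counting sign vectors. -/
theorem erdos_littlewood_offord :
    (∀ (n : ℕ) (v : Fin n → ℝ), (∀ i, v i ≠ 0) → ∀ b : ℝ,
      ({x : Fin n → ℝ | (∀ i, x i = 1 ∨ x i = -1) ∧ ∑ i, x i * v i = b}.ncard : ℝ) /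
          2 ^ n ≤
        (n.choose (n / 2) : ℝ) * (2 : ℝ)⁻¹ ^ n) ∧
    ∃ C : ℝ, 0 < C ∧ ∀ (n : ℕ), 1 ≤ n → ∀ (v : Fin n → ℝ), (∀ i, v i ≠ 0) → ∀ b : ℝ,
      ({x : Fin n → ℝ | (∀ i, x i = 1 ∨ x i = -1) ∧ ∑ i, x i * v i = b}.ncard : ℝ) /
          2 ^ n ≤
        C / Real.sqrt n := by
  constructor
  · intro n v hv b
    have h := elo_count n v hv b
    rw [inv_pow, ← div_eq_mul_inv]
    gcongr
  · refine ⟨1, one_pos, fun n hn v hv b => ?_⟩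
    have h := elo_count n v hv b
    have h2 := elo_choose_sq n
    set c : ℝ := (n.choose (n / 2) : ℝ) with hc
    have hcast : c ^ 2 * ((n : ℝ) + 1) ≤ 4 ^ n := by
      have := h2
      push_cast [hc]
      exact_mod_cast h2
    have hcnn : 0 ≤ c := by positivity
    have hkey : c * Real.sqrt n ≤ 2 ^ n := by
      have h4 : c ^ 2 * (n : ℝ) ≤ ((2 : ℝ) ^ n) ^ 2 := by
        have e : ((2 : ℝ) ^ n) ^ 2 = 4 ^ n := by
          rw [← pow_mul, mul_comm, pow_mul]; norm_num
        nlinarith [sq_nonneg c]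
      calc c * Real.sqrt n = Real.sqrt (c ^ 2 * n) := by
            rw [Real.sqrt_mul (sq_nonneg _), Real.sqrt_sq hcnn]
        _ ≤ Real.sqrt (((2 : ℝ) ^ n) ^ 2) := Real.sqrt_le_sqrt h4
        _ = 2 ^ n := Real.sqrt_sq (by positivity)
    have hs : 0 < Real.sqrt n := Real.sqrt_pos.mpr (by exact_mod_cast hn)
    rw [div_le_div_iff₀ (by positivity) hs, one_mul]
    calc ({x : Fin n → ℝ | (∀ i, x i = 1 ∨ x i = -1) ∧ ∑ i, x i * v i = b}.ncard : ℝ)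
          * Real.sqrt n ≤ c * Real.sqrt n := by
          gcongr
          rw [hc]
          exact Nat.cast_le.mpr h
      _ ≤ 2 ^ n := hkey
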